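/- Let P, Q ∈ Γ_n with 0 < r ≤ p_i/q_i ≤ R for all i and 0 < r < 1 < R. Then χ²(Q||P) = ∑(q_i−p_i)²/p_i ≤ (R−1)(1−r)/(rR) ≤ (R−r)²(R+r)/(4r²R²). -/
import Mathlib


theorem chisq_QP_bounds (n : ℕ) (hn : 2 ≤ n) (p q : Fin n → ℝ)
    (hp : ∀ i, 0 < p i) (hq : ∀ i, 0 < q i)
    (hps : ∑ i, p i = 1) (hqs : ∑ i, q i = 1)
    (r R : ℝ) (hr : 0 < r) (hr1 : r < 1) (h1R : 1 < R)
    (hbound : ∀ i, r ≤ p i / q i ∧ p i / q i ≤ R) :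
    (∑ i, (q i - p i) ^ 2 / p i) ≤ (R - 1) * (1 - r) / (r * R) ∧
    (R - 1) * (1 - r) / (r * R) ≤ (R - r) ^ 2 * (R + r) / (4 * r ^ 2 * R ^ 2) := by
  have hR0 : (0:ℝ) < R := by linarith
  have hrR : (0:ℝ) < r * R := mul_pos hr hR0
  constructor
  · have key : ∀ i, (q i - p i) ^ 2 / p i ≤
        ((R + r) * q i - p i) / (r * R) - 2 * q i + p i := by
      intro i
      obtain ⟨h1, h2⟩ := hbound i
      have hpi := hp i
      have hqi := hq i
      have h1' : r * q i ≤ p i := (le_div_iff₀ hqi).mp h1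
      have h2' : p i ≤ R * q i := (div_le_iff₀ hqi).mp h2
      have h3 : 0 ≤ (p i - r * q i) * (R * q i - p i) :=
        mul_nonneg (by linarith) (by linarith)
      rw [div_le_iff₀ hpi]
      have h4 : ((R + r) * q i - p i) / (r * R) * (r * R) = (R + r) * q i - p i :=
        div_mul_cancel₀ _ (ne_of_gt hrR)
      nlinarith [h3, h4, hrR, mul_pos hpi hqi]
    calc (∑ i, (q i - p i) ^ 2 / p i)
        ≤ ∑ i, (((R + r) * q i - p i) / (r * R) - 2 * q i + p i) :=
          Finset.sum_le_sum fun i _ => key i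
      _ = (R - 1) * (1 - r) / (r * R) := by
          simp only [Finset.sum_add_distrib, Finset.sum_sub_distrib, ← Finset.sum_div,
            ← Finset.mul_sum]
          rw [hps, hqs]
          field_simp
          ring
  · rw [div_le_div_iff₀ hrR (by positivity)]
    have hA : 4 * (R - 1) * (1 - r) ≤ (R - r) ^ 2 := by nlinarith [sq_nonneg (R + r - 2)]
    have hB : r * R ≤ R + r := by nlinarith [mul_pos (show (0:ℝ) < 1 - r by linarith) hR0]
    nlinarith [mul_le_mul_of_nonneg_right hA (by positivity : (0:ℝ) ≤ r ^ 2 * R ^ 2),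
      mul_le_mul_of_nonneg_left hB (by positivity : (0:ℝ) ≤ (R - r) ^ 2 * (r * R))]
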